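/- For n ≥ 1, setting s_n = (√(4n+1) - 5)/4, the function T_{n,2}^{s_n,s_n} is constant on [0,1] with value ((√(4n+1) - 1)/(4n))². -/

import Mathlib

open MeasureTheory intervalIntegral Filter

/-- The Beta operator with Jacobi weights: `B_n^{α,β}(f;x)`. -/
noncomputable def Bop (n α β : ℝ) (f : ℝ → ℝ) (x : ℝ) : ℝ :=
  (∫ t in (0:ℝ)..1, t ^ (n * x + α) * (1 - t) ^ (n - n * x + β) * f t) /
  (∫ t in (0:ℝ)..1, t ^ (n * x + α) * (1 - t) ^ (n - n * x + β))

/-- The `m`-th central moment `T_{n,m}^{α,β}(x)`. -/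
noncomputable def T (n α β : ℝ) (m : ℕ) (x : ℝ) : ℝ :=
  Bop n α β (fun t => (t - x) ^ m) x


/-- The Beta operator extended to the limiting cases `α = -1` (interpolation at `0`)
and `β = -1` (interpolation at `1`). -/
noncomputable def BopE (n α β : ℝ) (f : ℝ → ℝ) (x : ℝ) : ℝ :=
  if α = -1 ∧ x = 0 then f 0
  else if β = -1 ∧ x = 1 then f 1
  else Bop n α β f x

/-- The `m`-th central moment of the extended Beta operator. -/
noncomputable def TE (n α β : ℝ) (m : ℕ) (x : ℝ) : ℝ :=
  BopE n α β (fun t => (t - x) ^ m) x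

lemma beta_aux {p q : ℝ} (hp : -1 < p) (hq : -1 < q) :
    IntervalIntegrable (fun t : ℝ => t ^ p * (1 - t) ^ q) volume 0 1 ∧
    ∫ t in (0:ℝ)..1, t ^ p * (1 - t) ^ q
      = Real.Gamma (p+1) * Real.Gamma (q+1) / Real.Gamma (p+q+2) := by
  have hu : 0 < ((p:ℂ)+1).re := by simp; linarith
  have hv : 0 < ((q:ℂ)+1).re := by simp; linarith
  have hconv := Complex.betaIntegral_convergent hu hv
  have heq : Set.EqOn (fun t : ℝ => (t : ℂ) ^ (((p:ℂ)+1) - 1) * (1 - (t : ℂ)) ^ (((q:ℂ)+1) - 1))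
      (fun t : ℝ => ((t ^ p * (1 - t) ^ q : ℝ) : ℂ))
      (Set.uIcc (0:ℝ) 1) := by
    intro t ht
    rw [Set.uIcc_of_le (by norm_num : (0:ℝ) ≤ 1)] at ht
    simp only [add_sub_cancel_right, Complex.ofReal_mul]
    rw [Complex.ofReal_cpow ht.1, Complex.ofReal_cpow (by linarith [ht.2] : (0:ℝ) ≤ 1 - t)]
    push_cast
    ring_nf
  have hae : (fun t : ℝ => (t : ℂ) ^ (((p:ℂ)+1) - 1) * (1 - (t : ℂ)) ^ (((q:ℂ)+1) - 1))
      =ᵐ[volume.restrict (Set.uIoc (0:ℝ) 1)]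
      (fun t : ℝ => ((t ^ p * (1 - t) ^ q : ℝ) : ℂ)) :=
    ((ae_restrict_iff' measurableSet_uIoc).2 (ae_of_all _ fun t ht =>
      heq (Set.uIoc_subset_uIcc ht)))
  have h1 : IntervalIntegrable (fun t : ℝ => ((t ^ p * (1 - t) ^ q : ℝ) : ℂ)) volume 0 1 :=
    hconv.congr (fun t ht => heq (Set.uIoc_subset_uIcc ht))
  have hint : IntervalIntegrable (fun t : ℝ => t ^ p * (1 - t) ^ q) volume 0 1 := by
    rw [intervalIntegrable_iff] at h1 ⊢
    have h1re := h1.re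
    simp at h1re
    rw [Set.uIoc_of_le zero_le_one]
    exact h1re
  refine ⟨hint, ?_⟩
  have hbeta : Complex.betaIntegral ((p:ℂ)+1) ((q:ℂ)+1)
      = ((∫ t in (0:ℝ)..1, t ^ p * (1 - t) ^ q : ℝ) : ℂ) := by
    rw [Complex.betaIntegral, intervalIntegral.integral_congr heq, intervalIntegral.integral_ofReal]
  have hGpos : 0 < Real.Gamma (p+q+2) := Real.Gamma_pos_of_pos (by linarith)
  have hGne : Complex.Gamma (((p:ℂ)+1) + ((q:ℂ)+1)) ≠ 0 := by
    have : ((p:ℂ)+1) + ((q:ℂ)+1) = ((p+q+2 : ℝ) : ℂ) := by push_cast; ring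
    rw [this, Complex.Gamma_ofReal]
    exact_mod_cast hGpos.ne'
  have e1 : Complex.Gamma ((p:ℂ)+1) = ((Real.Gamma (p+1) : ℝ) : ℂ) := by
    rw [show (p:ℂ)+1 = ((p+1 : ℝ) : ℂ) by push_cast; ring, Complex.Gamma_ofReal]
  have e2 : Complex.Gamma ((q:ℂ)+1) = ((Real.Gamma (q+1) : ℝ) : ℂ) := by
    rw [show (q:ℂ)+1 = ((q+1 : ℝ) : ℂ) by push_cast; ring, Complex.Gamma_ofReal]
  have e3 : Complex.Gamma (((p:ℂ)+1) + ((q:ℂ)+1)) = ((Real.Gamma (p+q+2) : ℝ) : ℂ) := by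
    rw [show ((p:ℂ)+1) + ((q:ℂ)+1) = ((p+q+2 : ℝ) : ℂ) by push_cast; ring, Complex.Gamma_ofReal]
  have hmul := Complex.Gamma_mul_Gamma_eq_betaIntegral hu hv
  rw [hbeta, e1, e2, e3, ← Complex.ofReal_mul, ← Complex.ofReal_mul, Complex.ofReal_inj] at hmul
  field_simp
  linarith [hmul]

lemma alg (nr x s P Q : ℝ) (hn1 : 1 ≤ nr) (hs1 : 1 < s) (hs2 : s^2 = 4*nr+1)
    (hP : P = nr*x + (s-5)/4) (hQ : Q = nr - nr*x + (s-5)/4)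
    (h2 : 0 < P+Q+2) (h3 : 0 < P+Q+3) :
    (P+1)*(P+2)/((P+Q+2)*(P+Q+3)) - 2*x*(P+1)/(P+Q+2) + x^2 = ((s-1)/(4*nr))^2 := by
  have h2' : P+Q+2 ≠ 0 := ne_of_gt h2
  have h3' : P+Q+3 ≠ 0 := ne_of_gt h3
  have hn : (4:ℝ)*nr ≠ 0 := by positivity
  have e2 : P+Q+2 = (s-1)*(s+3)/4 := by rw [hP, hQ]; linear_combination (-1/4:ℝ)*hs2
  have e3 : P+Q+3 = (s+1)^2/4 := by rw [hP, hQ]; linear_combination (-1/4:ℝ)*hs2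
  have e4 : 4*nr = (s-1)*(s+1) := by linear_combination (-1:ℝ)*hs2
  have hnr : nr = (s^2-1)/4 := by linear_combination (-1/4:ℝ)*hs2
  have hs1' : s - 1 ≠ 0 := by linarith
  have hs3 : s + 3 ≠ 0 := by linarith
  have hs4 : s + 1 ≠ 0 := by linarith
  rw [e2, e3, e4, hP, hnr]
  field_simp
  ring

set_option maxHeartbeats 1000000 in
theorem constant_second_moment (n : ℕ) (hn : 1 ≤ n) :
    ∀ x ∈ Set.Icc (0:ℝ) 1,
      T n ((Real.sqrt (4 * n + 1) - 5) / 4) ((Real.sqrt (4 * n + 1) - 5) / 4) 2 x =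
        ((Real.sqrt (4 * n + 1) - 1) / (4 * n)) ^ 2 := by
  intro x hx
  obtain ⟨hx0, hx1⟩ := hx
  have hn1 : (1:ℝ) ≤ n := by exact_mod_cast hn
  have hs2 : Real.sqrt (4 * n + 1) ^ 2 = 4 * n + 1 := Real.sq_sqrt (by positivity)
  have hs1 : 1 < Real.sqrt (4 * n + 1) := by
    have : Real.sqrt 1 < Real.sqrt (4 * n + 1) := Real.sqrt_lt_sqrt (by norm_num) (by linarith)
    simpa using this
  simp only [T, Bop]
  set s : ℝ := Real.sqrt (4 * n + 1) with hsdef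
  set α : ℝ := (s - 5) / 4 with hα
  set p : ℝ := (n:ℝ) * x + α with hpdef
  set q : ℝ := (n:ℝ) - (n:ℝ) * x + α with hqdef
  have hnx0 : 0 ≤ (n:ℝ) * x := by positivity
  have hnx1 : (n:ℝ) * x ≤ n := by nlinarith
  have hp : -1 < p := by rw [hpdef, hα]; nlinarith
  have hq : -1 < q := by rw [hqdef, hα]; nlinarith
  have hp1 : -1 < p + 1 := by linarith
  have hp2 : -1 < p + 2 := by linarith
  have h0 := beta_aux hp hq
  have h1 := beta_aux hp1 hq
  have h2 := beta_aux hp2 hq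
  have G1pos : 0 < Real.Gamma (p+1) := Real.Gamma_pos_of_pos (by linarith)
  have G2pos : 0 < Real.Gamma (q+1) := Real.Gamma_pos_of_pos (by linarith)
  have Gpos : 0 < Real.Gamma (p+q+2) := Real.Gamma_pos_of_pos (by linarith)
  have rA : Real.Gamma (p+1+1) = (p+1) * Real.Gamma (p+1) :=
    Real.Gamma_add_one (by linarith)
  have rB : Real.Gamma (p+2+1) = (p+2) * ((p+1) * Real.Gamma (p+1)) := by
    rw [show p+2+1 = (p+2)+1 by ring, Real.Gamma_add_one (by linarith),
        show p+2 = (p+1)+1 by ring, Real.Gamma_add_one (by linarith)]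
  have rC : Real.Gamma (p+1+q+2) = (p+q+2) * Real.Gamma (p+q+2) := by
    rw [show p+1+q+2 = (p+q+2)+1 by ring, Real.Gamma_add_one (by linarith)]
  have rD : Real.Gamma (p+2+q+2) = (p+q+3) * ((p+q+2) * Real.Gamma (p+q+2)) := by
    rw [show p+2+q+2 = (p+q+3)+1 by ring, Real.Gamma_add_one (by linarith),
        show p+q+3 = (p+q+2)+1 by ring, Real.Gamma_add_one (by linarith)]
  have hsplit : Set.EqOn (fun t : ℝ => t ^ p * (1 - t) ^ q * (t - x) ^ 2)
      (fun t : ℝ => t ^ (p+2) * (1 - t) ^ q - 2*x*(t ^ (p+1) * (1 - t) ^ q)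
        + x^2*(t ^ p * (1 - t) ^ q)) (Set.uIcc (0:ℝ) 1) := by
    intro t ht
    rw [Set.uIcc_of_le (by norm_num : (0:ℝ) ≤ 1)] at ht
    rcases eq_or_lt_of_le ht.1 with h | h
    · simp only [← h]
      rw [Real.zero_rpow (by linarith : p+2 ≠ 0), Real.zero_rpow (by linarith : p+1 ≠ 0)]
      ring
    · have e2 : t ^ (p+2) = t ^ p * t ^ (2:ℕ) := by
        rw [Real.rpow_add h, ← Real.rpow_natCast t 2]; norm_num
      have e1 : t ^ (p+1) = t ^ p * t := by
        rw [Real.rpow_add h, Real.rpow_one]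
      simp only [e1, e2]
      ring
  have hnum : (∫ t in (0:ℝ)..1, t ^ p * (1 - t) ^ q * (t - x) ^ 2)
      = (∫ t in (0:ℝ)..1, t ^ (p+2) * (1 - t) ^ q)
        - 2*x*(∫ t in (0:ℝ)..1, t ^ (p+1) * (1 - t) ^ q)
        + x^2*(∫ t in (0:ℝ)..1, t ^ p * (1 - t) ^ q) := by
    rw [intervalIntegral.integral_congr hsplit,
        intervalIntegral.integral_add ((h2.1).sub ((h1.1).const_mul (2*x)))
          ((h0.1).const_mul (x^2)),
        intervalIntegral.integral_sub h2.1 ((h1.1).const_mul (2*x)),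
        intervalIntegral.integral_const_mul, intervalIntegral.integral_const_mul]
  rw [hnum, h0.2, h1.2, h2.2, rA, rB, rC, rD]
  have hD2 : 0 < p + q + 2 := by linarith
  have hD3 : 0 < p + q + 3 := by linarith
  have hstep : ((p+2) * ((p+1) * Real.Gamma (p+1)) * Real.Gamma (q+1)
        / ((p+q+3) * ((p+q+2) * Real.Gamma (p+q+2)))
      - 2*x*((p+1) * Real.Gamma (p+1) * Real.Gamma (q+1) / ((p+q+2) * Real.Gamma (p+q+2)))
      + x^2*(Real.Gamma (p+1) * Real.Gamma (q+1) / Real.Gamma (p+q+2)))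
      / (Real.Gamma (p+1) * Real.Gamma (q+1) / Real.Gamma (p+q+2))
      = (p+1)*(p+2)/((p+q+2)*(p+q+3)) - 2*x*(p+1)/(p+q+2) + x^2 := by
    field_simp
  rw [hstep]
  exact alg n x s p q hn1 hs1 hs2 (by rw [hpdef, hα]) (by rw [hqdef, hα])
    (by linarith) (by linarith)
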